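/- Let D, L ∈ ℝ^{n×n}, sᵢ := Σ_{k=1}^{n} L_{k,i}² for i ∈ {1,…,n}, and s_max := max(s₁,…,sₙ). Assume ‖D‖₂ < 1 and s_max > 0, set α := (1 − ‖D‖₂²)/s_max, and let p ∈ (0,1] satisfy p > 1/(1 + α). Then ‖Dᵀ D + ((1−p)/p) · Diag(Lᵀ L)‖₂ < 1. -/

import Mathlib

open Matrix

/-- The spectral norm (ℓ²-operator norm) of a real square matrix. -/
noncomputable def specNorm {n : ℕ} (M : Matrix (Fin n) (Fin n) ℝ) : ℝ :=
  ‖LinearMap.toContinuousLinearMap (Matrix.toEuclideanLin M)‖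

open scoped Matrix.Norms.L2Operator

lemma specNorm_eq_l2norm {n : ℕ} (M : Matrix (Fin n) (Fin n) ℝ) : specNorm M = ‖M‖ := rfl

lemma specNorm_nonneg {n : ℕ} (M : Matrix (Fin n) (Fin n) ℝ) : 0 ≤ specNorm M :=
  norm_nonneg _

lemma specNorm_diagonal_le {n : ℕ} (d : Fin n → ℝ) (c : ℝ) (hc : 0 ≤ c)
    (hd : ∀ i, |d i| ≤ c) : specNorm (Matrix.diagonal d) ≤ c := by
  rw [specNorm_eq_l2norm, Matrix.l2_opNorm_def]
  apply ContinuousLinearMap.opNorm_le_bound _ hc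
  intro x
  simp only [LinearEquiv.trans_apply, LinearMap.coe_toContinuousLinearMap']
  rw [Matrix.toEuclideanLin_apply]
  have hx : ‖x‖ = Real.sqrt (∑ i, ‖x i‖ ^ 2) := EuclideanSpace.norm_eq x
  have hy : ‖WithLp.toLp 2 (Matrix.diagonal d *ᵥ x.ofLp)‖
      = Real.sqrt (∑ i, ‖d i * x i‖ ^ 2) := by
    rw [EuclideanSpace.norm_eq]
    congr 1
    apply Finset.sum_congr rfl
    intro i _
    congr 1
    simp [Matrix.mulVec_diagonal]
  rw [hx, hy]
  rw [← Real.sqrt_sq hc, ← Real.sqrt_mul (by positivity)]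
  apply Real.sqrt_le_sqrt
  rw [Finset.mul_sum]
  apply Finset.sum_le_sum
  intro i _
  have h1 : ‖d i * x i‖ ^ 2 = (d i) ^ 2 * ‖x i‖ ^ 2 := by
    rw [norm_mul, mul_pow]
    congr 1
    rw [Real.norm_eq_abs, sq_abs]
  rw [h1]
  apply mul_le_mul_of_nonneg_right _ (by positivity)
  calc (d i) ^ 2 = |d i| ^ 2 := (sq_abs _).symm
    _ ≤ c ^ 2 := by apply pow_le_pow_left₀ (abs_nonneg _) (hd i)

/-- Let `D, L ∈ ℝ^{n×n}`, `sᵢ := Σₖ L_{k,i}²`, `s_max := max(s₁,…,sₙ)`.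
If `‖D‖₂ < 1`, `s_max > 0`, `α := (1 − ‖D‖₂²)/s_max` and `p ∈ (0,1]` with `p > 1/(1+α)`,
then `‖Dᵀ D + ((1−p)/p)·Diag(Lᵀ L)‖₂ < 1`. -/
theorem spectral_norm_lt_one_of_p_gt
    {n : ℕ} (D L : Matrix (Fin n) (Fin n) ℝ)
    (smax : ℝ) (hsmax : IsGreatest (Set.range fun i => ∑ k, (L k i) ^ 2) smax)
    (hD : specNorm D < 1) (hs : 0 < smax)
    (p : ℝ) (hp : p ∈ Set.Ioc (0 : ℝ) 1)
    (hpgt : p > 1 / (1 + (1 - specNorm D ^ 2) / smax)) :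
    specNorm (Dᵀ * D + ((1 - p) / p) •
      Matrix.diagonal (fun i => (Lᵀ * L) i i)) < 1 := by
  obtain ⟨hp0, hp1⟩ := hp
  set q := specNorm D with hq
  have hq0 : 0 ≤ q := specNorm_nonneg D
  have hq2 : q ^ 2 < 1 := by nlinarith
  set α : ℝ := (1 - q ^ 2) / smax with hα
  have hα0 : 0 < α := div_pos (by linarith) hs
  have h1α : 0 < 1 + α := by linarith
  -- from hpgt : p > 1/(1+α), deduce (1-p)/p < α
  have hc : (1 - p) / p < α := by
    have h2 : 1 / (1 + α) < p := hpgt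
    have h3 : 1 < p * (1 + α) := by
      rw [div_lt_iff₀ h1α] at h2; linarith
    rw [div_lt_iff₀ hp0]
    nlinarith
  have hc0 : 0 ≤ (1 - p) / p := div_nonneg (by linarith) hp0.le
  -- diagonal entries
  have hdiag : ∀ i, |(Lᵀ * L) i i| ≤ smax := by
    intro i
    have h : (Lᵀ * L) i i = ∑ k, (L k i) ^ 2 := by
      simp [Matrix.mul_apply, Matrix.transpose_apply, sq]
    rw [h, abs_of_nonneg (Finset.sum_nonneg fun k _ => sq_nonneg _)]
    exact hsmax.2 ⟨i, rfl⟩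
  have hDn : specNorm (Dᵀ * D) = q ^ 2 := by
    have : Dᵀ = Dᴴ := (Matrix.conjTranspose_eq_transpose_of_trivial D).symm
    rw [specNorm_eq_l2norm, this, Matrix.l2_opNorm_conjTranspose_mul_self, sq]
    rfl
  have hDiagn : specNorm (Matrix.diagonal fun i => (Lᵀ * L) i i) ≤ smax :=
    specNorm_diagonal_le _ smax hs.le hdiag
  have htri : specNorm (Dᵀ * D + ((1 - p) / p) •
      Matrix.diagonal (fun i => (Lᵀ * L) i i)) ≤
      q ^ 2 + ((1 - p) / p) * smax := by
    rw [specNorm_eq_l2norm]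
    calc ‖Dᵀ * D + ((1 - p) / p) • Matrix.diagonal (fun i => (Lᵀ * L) i i)‖
        ≤ ‖Dᵀ * D‖ + ‖((1 - p) / p) • Matrix.diagonal (fun i => (Lᵀ * L) i i)‖ :=
          norm_add_le _ _
      _ ≤ q ^ 2 + ((1 - p) / p) * smax := by
          rw [norm_smul, Real.norm_eq_abs, abs_of_nonneg hc0]
          have h1 : ‖Dᵀ * D‖ = q ^ 2 := hDn
          have h2 : ‖Matrix.diagonal fun i => (Lᵀ * L) i i‖ ≤ smax := hDiagn
          nlinarith
  have hfin : q ^ 2 + ((1 - p) / p) * smax < 1 := by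
    have : ((1 - p) / p) * smax < α * smax := by
      exact mul_lt_mul_of_pos_right hc hs
    rw [hα, div_mul_cancel₀ _ hs.ne'] at this
    linarith
  linarith
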